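/- For any three density matrices ρ, σ, ξ of the same size, F(ρ,σ)² + F(ξ,σ)² ≤ 1 + F(ρ,ξ). (Lemma on fidelity/trace-distance relations, item 2.) -/

import Mathlib

open scoped Matrix ComplexOrder

/-- The positive semidefinite square root of a matrix (junk value `0` if the matrix is not
positive semidefinite). -/
noncomputable def psdSqrt {m : ℕ} (A : Matrix (Fin m) (Fin m) ℂ) : Matrix (Fin m) (Fin m) ℂ :=
  letI := Classical.dec A.PosSemidef
  if h : A.PosSemidef then
    h.1.eigenvectorUnitary.1 * Matrix.diagonal ((↑) ∘ (√·) ∘ h.1.eigenvalues) *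
      (star h.1.eigenvectorUnitary : Matrix (Fin m) (Fin m) ℂ)
  else 0

/-- The fidelity `F(ρ,σ) = tr √(√ρ · σ · √ρ)` of two density matrices. -/
noncomputable def fidelity {m : ℕ} (ρ σ : Matrix (Fin m) (Fin m) ℂ) : ℝ :=
  ((psdSqrt (psdSqrt ρ * σ * psdSqrt ρ)).trace).re

/-- The trace distance `dist(ρ,σ) = (1/2)·tr √((ρ−σ)†(ρ−σ))` of two density matrices. -/
noncomputable def traceDist {m : ℕ} (ρ σ : Matrix (Fin m) (Fin m) ℂ) : ℝ :=
  (1 / 2) * ((psdSqrt ((ρ - σ)ᴴ * (ρ - σ))).trace).re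

noncomputable def Matrix.PosSemidef.sqrt {m : ℕ} {A : Matrix (Fin m) (Fin m) ℂ}
    (h : A.PosSemidef) : Matrix (Fin m) (Fin m) ℂ :=
  h.1.eigenvectorUnitary.1 * Matrix.diagonal ((↑) ∘ (√·) ∘ h.1.eigenvalues) *
    (star h.1.eigenvectorUnitary : Matrix (Fin m) (Fin m) ℂ)

lemma Matrix.IsHermitian.spec_eq {m : ℕ} {A : Matrix (Fin m) (Fin m) ℂ} (hA : A.IsHermitian) :
    A = (hA.eigenvectorUnitary : Matrix (Fin m) (Fin m) ℂ) *
      Matrix.diagonal (fun i => ((hA.eigenvalues i : ℝ) : ℂ)) *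
      (hA.eigenvectorUnitary : Matrix (Fin m) (Fin m) ℂ)ᴴ := by
  conv_lhs => rw [hA.spectral_theorem, Unitary.conjStarAlgAut_apply]
  rfl

lemma Matrix.PosSemidef.posSemidef_sqrt {m : ℕ} {A : Matrix (Fin m) (Fin m) ℂ}
    (h : A.PosSemidef) : h.sqrt.PosSemidef := by
  have hd : (Matrix.diagonal (fun i => ((Real.sqrt (h.1.eigenvalues i) : ℝ) : ℂ))).PosSemidef :=
    Matrix.posSemidef_diagonal_iff.mpr fun i => by
      rw [Complex.zero_le_real]; exact Real.sqrt_nonneg _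
  exact hd.mul_mul_conjTranspose_same (h.1.eigenvectorUnitary : Matrix (Fin m) (Fin m) ℂ)

lemma Matrix.PosSemidef.sqrt_mul_self {m : ℕ} {A : Matrix (Fin m) (Fin m) ℂ}
    (h : A.PosSemidef) : h.sqrt * h.sqrt = A := by
  have hU : (h.1.eigenvectorUnitary : Matrix (Fin m) (Fin m) ℂ)ᴴ *
      (h.1.eigenvectorUnitary : Matrix (Fin m) (Fin m) ℂ) = 1 :=
    Matrix.mem_unitaryGroup_iff'.mp h.1.eigenvectorUnitary.2
  have hs : Matrix.PosSemidef.sqrt h = (h.1.eigenvectorUnitary : Matrix (Fin m) (Fin m) ℂ) *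
      Matrix.diagonal (fun i => ((Real.sqrt (h.1.eigenvalues i) : ℝ) : ℂ)) *
      (h.1.eigenvectorUnitary : Matrix (Fin m) (Fin m) ℂ)ᴴ := rfl
  conv_rhs => rw [h.1.spec_eq]
  rw [hs]
  simp only [Matrix.mul_assoc]
  rw [← Matrix.mul_assoc _ (h.1.eigenvectorUnitary : Matrix (Fin m) (Fin m) ℂ), hU,
    Matrix.one_mul, ← Matrix.mul_assoc (Matrix.diagonal _), Matrix.diagonal_mul_diagonal]
  congr 3
  funext i
  rw [← Complex.ofReal_mul, Real.mul_self_sqrt (h.eigenvalues_nonneg i)]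

namespace FidAux
variable {m : ℕ}

noncomputable def dg (f : Fin m → ℝ) : Matrix (Fin m) (Fin m) ℂ :=
  Matrix.diagonal fun i => (f i : ℂ)

lemma dg_herm (f : Fin m → ℝ) : (dg f)ᴴ = dg f := by
  have h : (star fun i => ((f i : ℝ) : ℂ)) = fun i => ((f i : ℝ) : ℂ) := by
    funext i
    simp [Complex.conj_ofReal]
  rw [dg, Matrix.diagonal_conjTranspose, h]

lemma dg_mul (f g : Fin m → ℝ) : dg f * dg g = dg (fun i => f i * g i) := by
  rw [dg, dg, dg, Matrix.diagonal_mul_diagonal]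
  push_cast
  rfl

lemma dg_trace (f : Fin m → ℝ) : (dg (m := m) f).trace = ∑ i, (f i : ℂ) :=
  Matrix.trace_diagonal _

lemma dg_psd {f : Fin m → ℝ} (hf : ∀ i, 0 ≤ f i) : (dg f).PosSemidef := by
  refine Matrix.posSemidef_diagonal_iff.mpr fun i => ?_
  rw [Complex.zero_le_real]
  exact hf i

lemma dg_one : dg (m := m) (fun _ => 1) = 1 := by
  simp [dg]

lemma dg_sub (f g : Fin m → ℝ) : dg f - dg g = dg (fun i => f i - g i) := by
  rw [dg, dg, dg, Matrix.diagonal_sub]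
  push_cast
  rfl

/-- polar decomposition facts -/
lemma polar (X : Matrix (Fin m) (Fin m) ℂ) :
    ∃ U : Matrix (Fin m) (Fin m) ℂ, (1 - Uᴴ * U).PosSemidef ∧ (1 - U * Uᴴ).PosSemidef ∧
      (Uᴴ * X).trace = (Matrix.posSemidef_conjTranspose_mul_self X).sqrt.trace ∧
      X = U * (Matrix.posSemidef_conjTranspose_mul_self X).sqrt := by
  have hH : (Xᴴ * X).PosSemidef := Matrix.posSemidef_conjTranspose_mul_self X
  set W : Matrix (Fin m) (Fin m) ℂ := (hH.1.eigenvectorUnitary : Matrix (Fin m) (Fin m) ℂ)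
    with hW
  set d : Fin m → ℝ := hH.1.eigenvalues with hd
  have hdnn : ∀ i, 0 ≤ d i := hH.eigenvalues_nonneg
  have hWW : W * Wᴴ = 1 := Matrix.mem_unitaryGroup_iff.mp hH.1.eigenvectorUnitary.2
  have hWW' : Wᴴ * W = 1 := Matrix.mem_unitaryGroup_iff'.mp hH.1.eigenvectorUnitary.2
  set C : (Fin m → ℝ) → Matrix (Fin m) (Fin m) ℂ := fun f => W * dg f * Wᴴ with hC
  have hCmul : ∀ f g, C f * C g = C (fun i => f i * g i) := by
    intro f g
    simp only [hC, Matrix.mul_assoc]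
    rw [← Matrix.mul_assoc Wᴴ W, hWW', Matrix.one_mul, ← Matrix.mul_assoc (dg f), dg_mul]
  have hCherm : ∀ f, (C f)ᴴ = C f := by
    intro f
    simp only [hC, Matrix.conjTranspose_mul, Matrix.conjTranspose_conjTranspose, dg_herm,
      Matrix.mul_assoc]
  have hCtrace : ∀ f, (C f).trace = ∑ i, (f i : ℂ) := by
    intro f
    rw [hC]
    simp only
    rw [Matrix.trace_mul_cycle, hWW', Matrix.one_mul, dg_trace]
  have hCpsd : ∀ f, (∀ i, 0 ≤ f i) → (C f).PosSemidef := by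
    intro f hf
    exact (dg_psd hf).mul_mul_conjTranspose_same W
  have hCone : C (fun _ => 1) = 1 := by
    rw [hC]
    simp only [dg_one, Matrix.mul_one]
    exact hWW
  have hCsub : ∀ f g, C f - C g = C (fun i => f i - g i) := by
    intro f g
    simp only [hC]
    rw [← Matrix.sub_mul, ← Matrix.mul_sub, dg_sub]
  have hCcongr : ∀ f g, (∀ i, f i = g i) → C f = C g := by
    intro f g h
    have : f = g := funext h
    rw [this]
  have hHeq : Xᴴ * X = C d := hH.1.spec_eq
  have hsqrt_eq : hH.sqrt = C (fun i => Real.sqrt (d i)) := rfl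
  set gp : Fin m → ℝ := fun i => if d i = 0 then 0 else (Real.sqrt (d i))⁻¹ with hgp
  set U : Matrix (Fin m) (Fin m) ℂ := X * C gp with hU
  have hsq : ∀ i, Real.sqrt (d i) * Real.sqrt (d i) = d i :=
    fun i => Real.mul_self_sqrt (hdnn i)
  -- pointwise scalar facts
  have hsupp : ∀ i, gp i * Real.sqrt (d i) = if d i = 0 then 0 else 1 := by
    intro i
    by_cases h : d i = 0
    · simp [hgp, h]
    · have hpos : 0 < d i := lt_of_le_of_ne (hdnn i) (Ne.symm h)
      have hne : Real.sqrt (d i) ≠ 0 := ne_of_gt (Real.sqrt_pos.mpr hpos)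
      simp [hgp, h, inv_mul_cancel₀ hne]
  have hgp2d : ∀ i, gp i * d i * gp i = if d i = 0 then 0 else 1 := by
    intro i
    by_cases h : d i = 0
    · simp [hgp, h]
    · have hpos : 0 < d i := lt_of_le_of_ne (hdnn i) (Ne.symm h)
      have hne : Real.sqrt (d i) ≠ 0 := ne_of_gt (Real.sqrt_pos.mpr hpos)
      simp only [hgp, h, if_false]
      field_simp
      rw [Real.sq_sqrt (hdnn i)]
  have hgpd : ∀ i, gp i * d i = Real.sqrt (d i) := by
    intro i
    by_cases h : d i = 0
    · simp [hgp, h]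
    · have hpos : 0 < d i := lt_of_le_of_ne (hdnn i) (Ne.symm h)
      have hne : Real.sqrt (d i) ≠ 0 := ne_of_gt (Real.sqrt_pos.mpr hpos)
      simp only [hgp, h, if_false]
      field_simp
      rw [Real.sq_sqrt (hdnn i)]
  have hgpdgp2 : ∀ i, (gp i * gp i) * d i * (gp i * gp i) = gp i * gp i := by
    intro i
    by_cases h : d i = 0
    · simp [hgp, h]
    · have hpos : 0 < d i := lt_of_le_of_ne (hdnn i) (Ne.symm h)
      have hne : Real.sqrt (d i) ≠ 0 := ne_of_gt (Real.sqrt_pos.mpr hpos)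
      simp only [hgp, h, if_false]
      have hinv : (Real.sqrt (d i))⁻¹ * (Real.sqrt (d i))⁻¹ = (d i)⁻¹ := by
        rw [← mul_inv, hsq i]
      rw [hinv]
      field_simp
  -- X vanishes on the kernel projection
  have hker : X * C (fun i => if d i = 0 then 1 else 0) = 0 := by
    set e' : Fin m → ℝ := fun i => if d i = 0 then 1 else 0 with he'
    set Y : Matrix (Fin m) (Fin m) ℂ := X * (W * dg e') with hY
    have hmid : Wᴴ * (Xᴴ * X) * W = dg d := by
      rw [hHeq, hC]
      calc Wᴴ * (W * dg d * Wᴴ) * W = Wᴴ * W * dg d * (Wᴴ * W) := by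
            simp only [Matrix.mul_assoc]
        _ = dg d := by rw [hWW', Matrix.one_mul, Matrix.mul_one]
    have hYzero : Yᴴ * Y = 0 := by
      rw [hY]
      simp only [Matrix.conjTranspose_mul, dg_herm]
      have h9 : dg e' * Wᴴ * Xᴴ * (X * (W * dg e')) = dg e' * (Wᴴ * (Xᴴ * X) * W) * dg e' := by
        simp only [Matrix.mul_assoc]
      rw [h9, hmid, dg_mul, dg_mul]
      have h10 : (fun i => e' i * d i * e' i) = fun _ => (0 : ℝ) := by
        funext i
        by_cases h : d i = 0 <;> simp [he', h]
      rw [h10]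
      simp [dg]
    have hY0 : Y = 0 := Matrix.conjTranspose_mul_self_eq_zero.mp hYzero
    have h11 : X * C e' = Y * Wᴴ := by
      rw [hY, hC]
      simp only [Matrix.mul_assoc]
    rw [h11, hY0, Matrix.zero_mul]
  refine ⟨U, ?_, ?_, ?_, ?_⟩
  · -- 1 - Uᴴ U psd
    have h1 : Uᴴ * U = C (fun i => gp i * d i * gp i) := by
      rw [hU, Matrix.conjTranspose_mul, hCherm, Matrix.mul_assoc, ← Matrix.mul_assoc Xᴴ X,
        hHeq, hCmul, hCmul]
      exact hCcongr _ _ fun i => by ring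
    rw [h1, ← hCone, hCsub]
    refine hCpsd _ fun i => ?_
    rw [hgp2d i]
    by_cases h : d i = 0 <;> simp [h]
  · -- 1 - U Uᴴ psd
    have h2 : U * Uᴴ = X * C (fun i => gp i * gp i) * Xᴴ := by
      rw [hU, Matrix.conjTranspose_mul, hCherm, ← hCmul]
      simp only [Matrix.mul_assoc]
    have hproj : (U * Uᴴ) * (U * Uᴴ) = U * Uᴴ := by
      rw [h2]
      have h12 : X * C (fun i => gp i * gp i) * Xᴴ * (X * C (fun i => gp i * gp i) * Xᴴ)
          = X * (C (fun i => gp i * gp i) * (Xᴴ * X) * C (fun i => gp i * gp i)) * Xᴴ := by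
        simp only [Matrix.mul_assoc]
      rw [h12, hHeq, hCmul, hCmul]
      have h13 : C (fun i => gp i * gp i * d i * (gp i * gp i)) = C (fun i => gp i * gp i) :=
        hCcongr _ _ hgpdgp2
      rw [h13]
    have hherm : (U * Uᴴ)ᴴ = U * Uᴴ := by
      rw [h2]
      simp only [Matrix.conjTranspose_mul, hCherm, Matrix.conjTranspose_conjTranspose,
        Matrix.mul_assoc]
    have h14 : (1 - U * Uᴴ)ᴴ * (1 - U * Uᴴ) = 1 - U * Uᴴ := by
      rw [Matrix.conjTranspose_sub, Matrix.conjTranspose_one, hherm, Matrix.sub_mul,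
        Matrix.one_mul, Matrix.mul_sub, Matrix.mul_one, hproj]
      abel
    rw [← h14]
    exact Matrix.posSemidef_conjTranspose_mul_self _
  · -- trace identity
    have h3 : Uᴴ * X = C (fun i => gp i * d i) := by
      rw [hU, Matrix.conjTranspose_mul, hCherm, Matrix.mul_assoc, hHeq, hCmul]
    rw [h3, hsqrt_eq, hCtrace, hCtrace]
    exact Finset.sum_congr rfl fun i _ => by rw [hgpd i]
  · -- X = U * sqrt
    have h4 : U * hH.sqrt = X * C (fun i => gp i * Real.sqrt (d i)) := by
      rw [hU, hsqrt_eq, Matrix.mul_assoc, hCmul]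
    have h5 : C (fun i => gp i * Real.sqrt (d i))
        = C (fun i => 1 - (if d i = 0 then 1 else 0)) := by
      refine hCcongr _ _ fun i => ?_
      rw [hsupp i]
      by_cases h : d i = 0 <;> simp [h]
    have h6 : C (fun i => 1 - (if d i = 0 then 1 else 0))
        = 1 - C (fun i => if d i = 0 then 1 else 0) := by
      rw [← hCone, hCsub]
    rw [h4, h5, h6, Matrix.mul_sub, hker, Matrix.mul_one, sub_zero]


lemma psdSqrt_trace_re_nonneg {A : Matrix (Fin m) (Fin m) ℂ} (h : A.PosSemidef) :
    0 ≤ A.trace.re := by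
  have hdiag : ∀ i, 0 ≤ (A i i).re := by
    intro i
    have h2 := h.dotProduct_mulVec_nonneg (Pi.single i 1)
    have h3 : star (Pi.single i 1 : Fin m → ℂ) ⬝ᵥ (A *ᵥ Pi.single i 1) = A i i := by
      simp [dotProduct, Matrix.mulVec, Pi.single_apply]
    rw [h3] at h2
    exact (Complex.le_def.mp h2).1
  have h4 : A.trace.re = ∑ i, (A i i).re := by
    simp [Matrix.trace, Matrix.diag, Complex.re_sum]
  rw [h4]
  exact Finset.sum_nonneg fun i _ => hdiag i

lemma trace_conj_le {K : Matrix (Fin m) (Fin m) ℂ} (hK : (1 - K).PosSemidef)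
    (A : Matrix (Fin m) (Fin m) ℂ) :
    ((Aᴴ * K * A).trace).re ≤ ((Aᴴ * A).trace).re := by
  have h := psdSqrt_trace_re_nonneg (hK.conjTranspose_mul_mul_same A)
  have heq : Aᴴ * (1 - K) * A = Aᴴ * A - Aᴴ * K * A := by
    rw [Matrix.mul_sub, Matrix.sub_mul, Matrix.mul_one]
  rw [heq, Matrix.trace_sub, Complex.sub_re] at h
  linarith

noncomputable def emb (A : Matrix (Fin m) (Fin m) ℂ) : EuclideanSpace ℂ (Fin m × Fin m) :=
  (WithLp.equiv 2 _).symm (fun p => A p.1 p.2)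

lemma inner_emb (A B : Matrix (Fin m) (Fin m) ℂ) :
    (inner ℂ (emb A) (emb B) : ℂ) = (Aᴴ * B).trace := by
  simp only [emb, PiLp.inner_apply, RCLike.inner_apply, WithLp.equiv_symm_apply, PiLp.toLp_apply,
    Matrix.trace, Matrix.diag_apply, Matrix.mul_apply, Matrix.conjTranspose_apply]
  rw [Fintype.sum_prod_type]
  rw [Finset.sum_comm]
  exact Finset.sum_congr rfl fun i _ => Finset.sum_congr rfl fun j _ => mul_comm _ _

lemma norm_emb_sq (A : Matrix (Fin m) (Fin m) ℂ) :
    ‖emb A‖ ^ 2 = ((Aᴴ * A).trace).re := by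
  rw [norm_sq_eq_re_inner (𝕜 := ℂ), inner_emb]
  rfl

lemma norm_emb_le_one {A : Matrix (Fin m) (Fin m) ℂ} (h : ((Aᴴ * A).trace).re ≤ 1) :
    ‖emb A‖ ≤ 1 := by
  have h2 : ‖emb A‖ ^ 2 ≤ 1 := by rw [norm_emb_sq]; exact h
  nlinarith [norm_nonneg (emb A)]

/-- the abstract three-vector inequality -/
lemma vec_ineq {E : Type*} [NormedAddCommGroup E] [InnerProductSpace ℂ E]
    (a b c : E) (ha : ‖a‖ ≤ 1) (hb : ‖b‖ ≤ 1) (hc : ‖c‖ ≤ 1)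
    (hx : 0 ≤ (inner ℂ a b : ℂ).re) (hy : 0 ≤ (inner ℂ c b : ℂ).re) :
    (inner ℂ a b : ℂ).re ^ 2 + (inner ℂ c b : ℂ).re ^ 2 ≤ 1 + ‖(inner ℂ a c : ℂ)‖ := by
  set x : ℝ := (inner ℂ a b : ℂ).re with hxdef
  set y : ℝ := (inner ℂ c b : ℂ).re with hydef
  set F : ℝ := ‖(inner ℂ a c : ℂ)‖ with hFdef
  have hF0 : 0 ≤ F := norm_nonneg _
  set S : ℝ := x ^ 2 + y ^ 2 with hSdef
  have hS0 : 0 ≤ S := by positivity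
  set v : E := (x : ℂ) • a + (y : ℂ) • c with hv
  have h1 : (inner ℂ v b : ℂ).re = S := by
    rw [hv, inner_add_left, inner_smul_left, inner_smul_left, Complex.add_re,
      Complex.conj_ofReal, Complex.conj_ofReal, Complex.re_ofReal_mul, Complex.re_ofReal_mul,
      ← hxdef, ← hydef, hSdef]
    ring
  have h2 : S ≤ ‖v‖ := by
    rw [← h1]
    calc (inner ℂ v b : ℂ).re ≤ ‖(inner ℂ v b : ℂ)‖ := Complex.re_le_norm _
      _ ≤ ‖v‖ * ‖b‖ := norm_inner_le_norm _ _
      _ ≤ ‖v‖ * 1 := by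
          exact mul_le_mul_of_nonneg_left hb (norm_nonneg v)
      _ = ‖v‖ := mul_one _
  have h3 : ‖v‖ ^ 2 ≤ S * (1 + F) := by
    have hexp : ‖v‖ ^ 2 = ‖(x : ℂ) • a‖ ^ 2 + 2 * (inner ℂ ((x : ℂ) • a) ((y : ℂ) • c) : ℂ).re
        + ‖(y : ℂ) • c‖ ^ 2 := by
      rw [hv]
      exact norm_add_sq (𝕜 := ℂ) _ _
    have hna : ‖(x : ℂ) • a‖ ^ 2 ≤ x ^ 2 := by
      have hle : ‖(x : ℂ) • a‖ ≤ x := by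
        rw [norm_smul, Complex.norm_real, Real.norm_eq_abs, abs_of_nonneg hx]
        exact mul_le_of_le_one_right hx ha
      exact pow_le_pow_left₀ (norm_nonneg _) hle 2
    have hnc : ‖(y : ℂ) • c‖ ^ 2 ≤ y ^ 2 := by
      have hle : ‖(y : ℂ) • c‖ ≤ y := by
        rw [norm_smul, Complex.norm_real, Real.norm_eq_abs, abs_of_nonneg hy]
        exact mul_le_of_le_one_right hy hc
      exact pow_le_pow_left₀ (norm_nonneg _) hle 2
    have hmid : (inner ℂ ((x : ℂ) • a) ((y : ℂ) • c) : ℂ).re ≤ x * y * F := by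
      rw [inner_smul_left, inner_smul_right, Complex.conj_ofReal]
      rw [← mul_assoc, ← Complex.ofReal_mul, Complex.re_ofReal_mul]
      have h5 : (inner ℂ a c : ℂ).re ≤ F := by
        rw [hFdef]
        exact Complex.re_le_norm _
      nlinarith [mul_nonneg hx hy]
    have h2xy : 2 * (x * y) ≤ S := by
      rw [hSdef]
      nlinarith [two_mul_le_add_sq x y]
    calc ‖v‖ ^ 2 ≤ x ^ 2 + 2 * (x * y * F) + y ^ 2 := by rw [hexp]; linarith
      _ ≤ S + S * F := by
          have h7 : 2 * (x * y * F) ≤ S * F := by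
            have h8 : 2 * (x * y * F) = (2 * (x * y)) * F := by ring
            rw [h8]
            exact mul_le_mul_of_nonneg_right h2xy hF0
          linarith
      _ = S * (1 + F) := by ring
  have h4 : S ^ 2 ≤ S * (1 + F) := by
    calc S ^ 2 ≤ ‖v‖ ^ 2 := by nlinarith [norm_nonneg v]
      _ ≤ S * (1 + F) := h3
  have hfin : S ≤ 1 + F := by
    rcases eq_or_lt_of_le hS0 with h | h
    · rw [← h]
      linarith
    · nlinarith
  calc x ^ 2 + y ^ 2 = S := hSdef.symm
    _ ≤ 1 + F := hfin



lemma abs_trace_mul_le {Mc : Matrix (Fin m) (Fin m) ℂ} (X : Matrix (Fin m) (Fin m) ℂ)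
    (hM : (1 - Mc * Mcᴴ).PosSemidef) :
    ‖((Mc * X).trace)‖ ≤ ((Matrix.posSemidef_conjTranspose_mul_self X).sqrt.trace).re := by
  obtain ⟨U, hU1, hU2, htr, hX⟩ := polar X
  set P := (Matrix.posSemidef_conjTranspose_mul_self X).sqrt with hP
  have hPpsd : P.PosSemidef := (Matrix.posSemidef_conjTranspose_mul_self X).posSemidef_sqrt
  set R := hPpsd.sqrt with hR
  have hRpsd : R.PosSemidef := hPpsd.posSemidef_sqrt
  have hRh : Rᴴ = R := hRpsd.1
  have hRR : R * R = P := hPpsd.sqrt_mul_self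
  have htrP : 0 ≤ P.trace.re := psdSqrt_trace_re_nonneg hPpsd
  have key : (Mc * X).trace = (inner ℂ (emb ((Mc * U)ᴴ * R)) (emb R) : ℂ) := by
    rw [inner_emb, Matrix.conjTranspose_mul, Matrix.conjTranspose_conjTranspose, hRh]
    conv_rhs => rw [Matrix.trace_mul_cycle]
    rw [hRR]
    conv_rhs => rw [Matrix.trace_mul_comm]
    rw [Matrix.mul_assoc, ← hX]
  have hnR : ‖emb R‖ = Real.sqrt (P.trace.re) := by
    have h0 : ‖emb R‖ ^ 2 = P.trace.re := by rw [norm_emb_sq, hRh, hRR]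
    rw [← h0, Real.sqrt_sq (norm_nonneg _)]
  have hnA : ‖emb ((Mc * U)ᴴ * R)‖ ≤ Real.sqrt (P.trace.re) := by
    have e2 : ((Mc * U)ᴴ * R)ᴴ * ((Mc * U)ᴴ * R) = (Mcᴴ * R)ᴴ * (U * Uᴴ) * (Mcᴴ * R) := by
      simp only [Matrix.conjTranspose_mul, Matrix.conjTranspose_conjTranspose, Matrix.mul_assoc]
    have h1 := trace_conj_le hU2 (Mcᴴ * R)
    have h2 := trace_conj_le hM R
    have e3 : (Mcᴴ * R)ᴴ * (Mcᴴ * R) = Rᴴ * (Mc * Mcᴴ) * R := by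
      simp only [Matrix.conjTranspose_mul, Matrix.conjTranspose_conjTranspose, Matrix.mul_assoc]
    have e4 : ((Rᴴ * R).trace).re = P.trace.re := by rw [hRh, hRR]
    have hsq2 : ‖emb ((Mc * U)ᴴ * R)‖ ^ 2 ≤ P.trace.re := by
      rw [norm_emb_sq, e2]
      rw [e3] at h1
      linarith
    rw [← Real.sqrt_sq (norm_nonneg (emb ((Mc * U)ᴴ * R)))]
    exact Real.sqrt_le_sqrt hsq2
  calc ‖(Mc * X).trace‖ = ‖(inner ℂ (emb ((Mc * U)ᴴ * R)) (emb R) : ℂ)‖ := by rw [key]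
    _ ≤ ‖emb ((Mc * U)ᴴ * R)‖ * ‖emb R‖ := norm_inner_le_norm _ _
    _ ≤ Real.sqrt (P.trace.re) * Real.sqrt (P.trace.re) := by
        rw [hnR]
        exact mul_le_mul_of_nonneg_right hnA (Real.sqrt_nonneg _)
    _ = P.trace.re := Real.mul_self_sqrt htrP

lemma psdSqrt_eq {A : Matrix (Fin m) (Fin m) ℂ} (h : A.PosSemidef) : psdSqrt A = h.sqrt := by
  unfold psdSqrt
  exact dif_pos h

lemma fidelity_eq {ρ σ : Matrix (Fin m) (Fin m) ℂ} (hρ : ρ.PosSemidef) (hσ : σ.PosSemidef) :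
    fidelity ρ σ
      = ((Matrix.posSemidef_conjTranspose_mul_self (hσ.sqrt * hρ.sqrt)).sqrt.trace).re := by
  rw [fidelity, psdSqrt_eq hρ]
  have h1 : hρ.sqrt * σ * hρ.sqrt = (hσ.sqrt * hρ.sqrt)ᴴ * (hσ.sqrt * hρ.sqrt) := by
    rw [Matrix.conjTranspose_mul, hρ.posSemidef_sqrt.1, hσ.posSemidef_sqrt.1]
    conv_lhs => rw [← hσ.sqrt_mul_self]
    simp only [Matrix.mul_assoc]
  rw [h1, psdSqrt_eq (Matrix.posSemidef_conjTranspose_mul_self _)]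

end FidAux

/-- For any three density matrices `ρ σ ξ`, one has `F(ρ,σ)² + F(ξ,σ)² ≤ 1 + F(ρ,ξ)`. -/
theorem fidelity_sq_add_fidelity_sq_le {m : ℕ} (ρ σ ξ : Matrix (Fin m) (Fin m) ℂ)
    (hρ : ρ.PosSemidef) (hσ : σ.PosSemidef) (hξ : ξ.PosSemidef)
    (hρ1 : ρ.trace = 1) (hσ1 : σ.trace = 1) (hξ1 : ξ.trace = 1) :
    fidelity ρ σ ^ 2 + fidelity ξ σ ^ 2 ≤ 1 + fidelity ρ ξ := by
  classical
  set r := hρ.sqrt with hrdef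
  set s := hσ.sqrt with hsdef
  set t := hξ.sqrt with htdef
  have hr1 : rᴴ = r := hρ.posSemidef_sqrt.1
  have hs1 : sᴴ = s := hσ.posSemidef_sqrt.1
  have ht1 : tᴴ = t := hξ.posSemidef_sqrt.1
  obtain ⟨U₁, hU₁c, hU₁c', htr₁, -⟩ := FidAux.polar (s * r)
  obtain ⟨U₂, hU₂c, hU₂c', htr₂, -⟩ := FidAux.polar (s * t)
  set a := FidAux.emb (U₁ * r) with hadef
  set b := FidAux.emb s with hbdef
  set c := FidAux.emb (U₂ * t) with hcdef
  have hb : ‖b‖ ≤ 1 := by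
    apply FidAux.norm_emb_le_one
    rw [hs1, hσ.sqrt_mul_self, hσ1]
    simp
  have ha : ‖a‖ ≤ 1 := by
    apply FidAux.norm_emb_le_one
    have e : (U₁ * r)ᴴ * (U₁ * r) = rᴴ * (U₁ᴴ * U₁) * r := by
      simp only [Matrix.conjTranspose_mul, Matrix.mul_assoc]
    rw [e]
    have h5 := FidAux.trace_conj_le hU₁c r
    have e2 : ((rᴴ * r).trace).re = 1 := by
      rw [hr1, hρ.sqrt_mul_self, hρ1]
      simp
    linarith
  have hc : ‖c‖ ≤ 1 := by
    apply FidAux.norm_emb_le_one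
    have e : (U₂ * t)ᴴ * (U₂ * t) = tᴴ * (U₂ᴴ * U₂) * t := by
      simp only [Matrix.conjTranspose_mul, Matrix.mul_assoc]
    rw [e]
    have h5 := FidAux.trace_conj_le hU₂c t
    have e2 : ((tᴴ * t).trace).re = 1 := by
      rw [ht1, hξ.sqrt_mul_self, hξ1]
      simp
    linarith
  have hab : (inner ℂ a b : ℂ)
      = (Matrix.posSemidef_conjTranspose_mul_self (s * r)).sqrt.trace := by
    rw [hadef, hbdef, FidAux.inner_emb, ← htr₁, Matrix.conjTranspose_mul, hr1,
      Matrix.trace_mul_cycle, Matrix.trace_mul_cycle, Matrix.mul_assoc]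
  have hcb : (inner ℂ c b : ℂ)
      = (Matrix.posSemidef_conjTranspose_mul_self (s * t)).sqrt.trace := by
    rw [hcdef, hbdef, FidAux.inner_emb, ← htr₂, Matrix.conjTranspose_mul, ht1,
      Matrix.trace_mul_cycle, Matrix.trace_mul_cycle, Matrix.mul_assoc]
  have hac : (inner ℂ a c : ℂ) = ((U₁ᴴ * U₂) * (t * r)).trace := by
    rw [hadef, hcdef, FidAux.inner_emb]
    have e : (U₁ * r)ᴴ * (U₂ * t) = r * (U₁ᴴ * (U₂ * t)) := by
      simp only [Matrix.conjTranspose_mul, hr1, Matrix.mul_assoc]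
    rw [e, Matrix.trace_mul_comm]
    congr 1
    simp only [Matrix.mul_assoc]
  have hx0 : 0 ≤ (inner ℂ a b : ℂ).re := by
    rw [hab]
    exact FidAux.psdSqrt_trace_re_nonneg
      (Matrix.posSemidef_conjTranspose_mul_self (s * r)).posSemidef_sqrt
  have hy0 : 0 ≤ (inner ℂ c b : ℂ).re := by
    rw [hcb]
    exact FidAux.psdSqrt_trace_re_nonneg
      (Matrix.posSemidef_conjTranspose_mul_self (s * t)).posSemidef_sqrt
  have hMc : (1 - (U₁ᴴ * U₂) * (U₁ᴴ * U₂)ᴴ).PosSemidef := by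
    have e : 1 - (U₁ᴴ * U₂) * (U₁ᴴ * U₂)ᴴ
        = (1 - U₁ᴴ * U₁) + U₁ᴴ * (1 - U₂ * U₂ᴴ) * U₁ := by
      simp only [Matrix.conjTranspose_mul, Matrix.conjTranspose_conjTranspose]
      noncomm_ring
    rw [e]
    exact hU₁c.add (hU₂c'.conjTranspose_mul_mul_same U₁)
  have hbound : ‖(inner ℂ a c : ℂ)‖ ≤ fidelity ρ ξ := by
    rw [hac, FidAux.fidelity_eq hρ hξ]
    exact FidAux.abs_trace_mul_le (t * r) hMc
  have hmain := FidAux.vec_ineq a b c ha hb hc hx0 hy0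
  have hfρσ : fidelity ρ σ = (inner ℂ a b : ℂ).re := by
    rw [FidAux.fidelity_eq hρ hσ, hab]
  have hfξσ : fidelity ξ σ = (inner ℂ c b : ℂ).re := by
    rw [FidAux.fidelity_eq hξ hσ, hcb]
  rw [hfρσ, hfξσ]
  linarith
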